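/- Let H be a hypergraph and let f_𝓔 ∈ I_H be the binomial arising from a balanced edge set 𝓔 with n = |𝓔_blue| ≥ |𝓔_red|. Then f_𝓔 lies in the ideal generated by the binomials of I_H of total degree strictly less than n provided one of the following two conditions holds: (i) there exists a proper splitting set S of 𝓔 with a decomposition (Γ1, S, Γ2) in which |(Γ1)_blue| < n, |(Γ1)_red| < n, |(Γ2)_blue| < n and |(Γ2)_red| < n; or (ii) there exist a blue splitting set S and a red splitting set R of 𝓔, each of size less than n, with decompositions (Γ1, S, Γ2) and (Υ1, R, Υ2) respectively, such that |(Γ1)_blue| < n, |(Υ2)_red| < n, |(Γ2)_blue| ≤ n, |(Υ1)_red| ≤ n, and S ∩ R ≠ ∅. -/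

import Mathlib

open MvPolynomial

namespace ToricHG

variable (K : Type) [Field K] (V : Type) [Fintype V] [DecidableEq V]

/-- The edges of a hypergraph with edge set `E`, as a type. -/
abbrev Edge (E : Finset (Finset V)) : Type := {e : Finset V // e ∈ E}

/-- The monomial map `t_e ↦ ∏_{v ∈ e} x_v`. -/
noncomputable def phiH (E : Finset (Finset V)) :
    MvPolynomial (Edge V E) K →ₐ[K] MvPolynomial V K :=
  aeval (fun e : Edge V E => ∏ v ∈ e.1, (X v : MvPolynomial V K))

/-- The toric ideal of a hypergraph. -/
noncomputable def toricIdeal (E : Finset (Finset V)) :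
    Ideal (MvPolynomial (Edge V E) K) :=
  RingHom.ker (phiH K V E).toRingHom

/-- The number of edges of the multiset `M` containing `v`, counted with multiplicity. -/
def degIn (E : Finset (Finset V)) (v : V) (M : Multiset (Edge V E)) : ℕ :=
  Multiset.card (M.filter (fun e => v ∈ e.1))

/-- The bicolored edge multiset `(B, R)` is balanced. -/
def Balanced (E : Finset (Finset V)) (B R : Multiset (Edge V E)) : Prop :=
  ∀ v : V, degIn V E v B = degIn V E v R

/-- The binomial arising from the bicolored edge multiset `(B, R)`. -/
noncomputable def binom (E : Finset (Finset V)) (B R : Multiset (Edge V E)) :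
    MvPolynomial (Edge V E) K :=
  (B.map fun e => (X e : MvPolynomial (Edge V E) K)).prod -
    (R.map fun e => (X e : MvPolynomial (Edge V E) K)).prod

/-- The balanced edge set `(B, R)` is primitive. -/
def Primitive (E : Finset (Finset V)) (B R : Multiset (Edge V E)) : Prop :=
  Balanced V E B R ∧
    ¬ ∃ B' R' : Multiset (Edge V E),
        ¬(B' = 0 ∧ R' = 0) ∧ Balanced V E B' R' ∧ B' < B ∧ R' < R

/-- The balanced edge set `(Fb, Fr)` is reducible with separator `S` and
decomposition `((G1b, G1r), S, (G2b, G2r))`. -/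
def ReducibleWith (E : Finset (Finset V))
    (Fb Fr S G1b G1r G2b G2r : Multiset (Edge V E)) : Prop :=
  Balanced V E Fb Fr ∧ S ≠ 0 ∧ S.toFinset ⊆ (Fb + Fr).toFinset ∧
    Balanced V E G1b G1r ∧ Balanced V E G2b G2r ∧
    ¬(G1b = Fb ∧ G1r = Fr) ∧ ¬(G2b = Fb ∧ G2r = Fr) ∧
    S = G1r ∩ G2b ∧ Fb = G1b + G2b ∧ Fr = G1r + G2r

/-- `S` is a splitting set of the balanced edge set `(Eb, Er)` with
decomposition `((G1b, G1r), S, (G2b, G2r))`, i.e. `(Eb, Er) + S` is reducible with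
separator `S` and this decomposition. -/
def SplittingSetWith (E : Finset (Finset V))
    (Eb Er S G1b G1r G2b G2r : Multiset (Edge V E)) : Prop :=
  ReducibleWith V E (Eb + S) (Er + S) S G1b G1r G2b G2r

/-- `S` is a proper splitting set of the balanced edge set `(Eb, Er)`. -/
def ProperSplittingSet (E : Finset (Finset V))
    (Eb Er S : Multiset (Edge V E)) : Prop :=
  ∃ G1b G1r G2b G2r : Multiset (Edge V E),
    SplittingSetWith V E Eb Er S G1b G1r G2b G2r ∧ S < G1r ∧ S < G2b

/-- A binomial: the difference of two distinct monic monomials. -/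
def IsBinomial (E : Finset (Finset V)) (f : MvPolynomial (Edge V E) K) : Prop :=
  ∃ a b : (Edge V E) →₀ ℕ, a ≠ b ∧ f = monomial a 1 - monomial b 1

/-- `f` is an indispensable binomial of the toric ideal of the hypergraph. -/
def Indispensable (E : Finset (Finset V)) (f : MvPolynomial (Edge V E) K) : Prop :=
  ∀ G : Set (MvPolynomial (Edge V E) K),
    (∀ g ∈ G, IsBinomial K V E g) → Ideal.span G = toricIdeal K V E →
      f ∈ G ∨ -f ∈ G

/-- The Graver basis of the toric ideal of the hypergraph: the binomials arising from
primitive balanced edge sets `(B, R)` with `B ≠ R`. -/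
def GraverSet (E : Finset (Finset V)) : Set (MvPolynomial (Edge V E) K) :=
  {f | ∃ B R : Multiset (Edge V E), Primitive V E B R ∧ B ≠ R ∧ f = binom K V E B R}

/-- The ideal `I` is generated in degree at most `d`. -/
def GenInDegLE {σ : Type} (I : Ideal (MvPolynomial σ K)) (d : ℕ) : Prop :=
  I = Ideal.span {f | f ∈ I ∧ f.totalDegree ≤ d}

end ToricHG

namespace ToricHG

variable {K : Type} [Field K] {V : Type} [Fintype V] [DecidableEq V] {E : Finset (Finset V)}

noncomputable def mono (K : Type) [Field K] {V : Type} [Fintype V] [DecidableEq V]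
    (E : Finset (Finset V)) (M : Multiset (Edge V E)) : MvPolynomial (Edge V E) K :=
  (M.map fun e => X e).prod

lemma binom_eq (B R : Multiset (Edge V E)) :
    binom K V E B R = mono K E B - mono K E R := rfl

lemma mono_add (A C : Multiset (Edge V E)) :
    mono K E (A + C) = mono K E A * mono K E C := by
  simp [mono, Multiset.prod_add]

lemma mono_cons (e : Edge V E) (M : Multiset (Edge V E)) :
    mono K E (e ::ₘ M) = X e * mono K E M := by
  simp [mono]

lemma toFinsupp_cons' {α : Type} [DecidableEq α] (e : α) (M : Multiset α) :
    Multiset.toFinsupp (e ::ₘ M) = Finsupp.single e 1 + Multiset.toFinsupp M := by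
  ext a
  simp [Multiset.count_cons, Finsupp.single_apply]
  split <;> simp_all [add_comm, eq_comm]

lemma mono_eq_monomial (M : Multiset (Edge V E)) :
    mono K E M = monomial (Multiset.toFinsupp M) 1 := by
  induction M using Multiset.induction with
  | empty => simp [mono]
  | cons e M ih =>
    rw [mono_cons, ih]
    rw [X, monomial_mul, one_mul, toFinsupp_cons']

lemma totalDegree_mono_le (M : Multiset (Edge V E)) :
    (mono K E M).totalDegree ≤ Multiset.card M := by
  induction M using Multiset.induction with
  | empty => simp [mono]
  | cons e M ih =>
    rw [mono_cons]
    calc (X e * mono K E M).totalDegree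
        ≤ (X e : MvPolynomial (Edge V E) K).totalDegree + (mono K E M).totalDegree :=
          totalDegree_mul _ _
      _ ≤ 1 + Multiset.card M := by rw [totalDegree_X]; omega
      _ = Multiset.card (e ::ₘ M) := by simp [add_comm]

lemma degIn_cons (v : V) (e : Edge V E) (M : Multiset (Edge V E)) :
    degIn V E v (e ::ₘ M) = (if v ∈ e.1 then 1 else 0) + degIn V E v M := by
  simp [degIn, Multiset.filter_cons]
  split <;> simp [add_comm]

lemma phiH_mono (M : Multiset (Edge V E)) :
    phiH K V E (mono K E M) = ∏ v : V, (X v : MvPolynomial V K) ^ degIn V E v M := by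
  induction M using Multiset.induction with
  | empty => simp [mono, degIn]
  | cons e M ih =>
    rw [mono_cons, map_mul, ih]
    have h1 : phiH K V E (X e) = ∏ v ∈ e.1, (X v : MvPolynomial V K) := by
      simp [phiH]
    rw [h1]
    have h2 : ∏ v ∈ e.1, (X v : MvPolynomial V K)
        = ∏ v : V, (X v : MvPolynomial V K) ^ (if v ∈ e.1 then 1 else 0) := by
      rw [show (∏ v : V, (X v : MvPolynomial V K) ^ (if v ∈ e.1 then 1 else 0))
          = ∏ v : V, (if v ∈ e.1 then X v else 1) from
        Finset.prod_congr rfl fun v _ => by split <;> simp,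
        Finset.prod_ite_mem, Finset.univ_inter]
    rw [h2, ← Finset.prod_mul_distrib]
    refine Finset.prod_congr rfl fun v _ => ?_
    rw [degIn_cons, pow_add]

lemma binom_mem_toricIdeal {B R : Multiset (Edge V E)} (h : Balanced V E B R) :
    binom K V E B R ∈ toricIdeal K V E := by
  rw [toricIdeal, RingHom.mem_ker, binom_eq]
  show phiH K V E (mono K E B - mono K E R) = 0
  rw [map_sub, sub_eq_zero, phiH_mono, phiH_mono]
  exact Finset.prod_congr rfl fun v _ => by rw [h v]

lemma binom_mem_span {n : ℕ} {B R : Multiset (Edge V E)} (h : Balanced V E B R)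
    (hb : Multiset.card B < n) (hr : Multiset.card R < n) :
    binom K V E B R ∈
      Ideal.span {f | f ∈ toricIdeal K V E ∧ IsBinomial K V E f ∧ f.totalDegree < n} := by
  by_cases hBR : B = R
  · simp [binom_eq, hBR]
  · apply Ideal.subset_span
    refine ⟨binom_mem_toricIdeal h, ⟨Multiset.toFinsupp B, Multiset.toFinsupp R, ?_, ?_⟩, ?_⟩
    · exact fun hc => hBR (Multiset.toFinsupp.injective hc)
    · rw [binom_eq, mono_eq_monomial, mono_eq_monomial]
    · rw [binom_eq, sub_eq_add_neg]
      calc (mono K E B + -mono K E R).totalDegree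
          ≤ max (mono K E B).totalDegree (-mono K E R : MvPolynomial (Edge V E) K).totalDegree :=
            totalDegree_add _ _
        _ < n := by
            rw [totalDegree_neg]
            exact max_lt (lt_of_le_of_lt (totalDegree_mono_le B) hb)
              (lt_of_le_of_lt (totalDegree_mono_le R) hr)

lemma balanced_erase {B R : Multiset (Edge V E)} (h : Balanced V E B R)
    {c : Edge V E} (hcB : c ∈ B) (hcR : c ∈ R) :
    Balanced V E (B.erase c) (R.erase c) := by
  intro v
  have h1 : degIn V E v B = (if v ∈ c.1 then 1 else 0) + degIn V E v (B.erase c) := by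
    conv_lhs => rw [← Multiset.cons_erase hcB]
    rw [degIn_cons]
  have h2 : degIn V E v R = (if v ∈ c.1 then 1 else 0) + degIn V E v (R.erase c) := by
    conv_lhs => rw [← Multiset.cons_erase hcR]
    rw [degIn_cons]
  have := h v
  omega

/-- Let `f_𝓔 ∈ I_H` arise from a balanced edge set `𝓔 = (B, R)` with
`n = |B| ≥ |R|`. If (i) `𝓔` has a proper splitting set whose decomposition has all four parts of
size `< n`, or (ii) `𝓔` has a blue splitting set `S` and a red splitting set `T`, each of size
`< n`, with decompositions satisfying `|Γ1_blue| < n`, `|Υ2_red| < n`, `|Γ2_blue| ≤ n`,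
`|Υ1_red| ≤ n`, and `S ∩ T ≠ ∅`, then `f_𝓔` lies in the ideal generated by the binomials of
`I_H` of total degree strictly less than `n`. -/
theorem nonuniform_degree_bound
    (K : Type) [Field K] (V : Type) [Fintype V] [DecidableEq V]
    (E : Finset (Finset V)) (hE : ∀ e ∈ E, e.Nonempty)
    (B R : Multiset (Edge V E)) (n : ℕ)
    (hbal : Balanced V E B R)
    (hn : Multiset.card B = n) (hge : Multiset.card R ≤ Multiset.card B)
    (hcond :
      (∃ S G1b G1r G2b G2r : Multiset (Edge V E),
          SplittingSetWith V E B R S G1b G1r G2b G2r ∧ S < G1r ∧ S < G2b ∧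
          Multiset.card G1b < n ∧ Multiset.card G1r < n ∧
          Multiset.card G2b < n ∧ Multiset.card G2r < n) ∨
      (∃ S T G1b G1r G2b G2r U1b U1r U2b U2r : Multiset (Edge V E),
          SplittingSetWith V E B R S G1b G1r G2b G2r ∧ G1r = S ∧ Multiset.card S < n ∧
          SplittingSetWith V E B R T U1b U1r U2b U2r ∧ U2b = T ∧ Multiset.card T < n ∧
          Multiset.card G1b < n ∧ Multiset.card U2r < n ∧
          Multiset.card G2b ≤ n ∧ Multiset.card U1r ≤ n ∧ S ∩ T ≠ 0)) :
    binom K V E B R ∈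
      Ideal.span {f | f ∈ toricIdeal K V E ∧ IsBinomial K V E f ∧ f.totalDegree < n} := by
  obtain hcase | hcase := hcond
  · -- Case (i): proper splitting set
    obtain ⟨S, G1b, G1r, G2b, G2r, hsplit, hS1, hS2, h1b, h1r, h2b, h2r⟩ := hcase
    obtain ⟨-, hSne, -, hbal1, hbal2, -, -, hSeq, hBeq, hReq⟩ := hsplit
    have hS_le_2b : S ≤ G2b := hSeq ▸ Multiset.inter_le_right
    have hS_le_1r : S ≤ G1r := hSeq ▸ Multiset.inter_le_left
    obtain ⟨B2, hB2⟩ : ∃ x, G2b = S + x := ⟨G2b - S, (add_tsub_cancel_of_le hS_le_2b).symm⟩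
    obtain ⟨R1, hR1⟩ : ∃ x, G1r = S + x := ⟨G1r - S, (add_tsub_cancel_of_le hS_le_1r).symm⟩
    have hB' : B = G1b + B2 := by
      have h := hBeq
      rw [hB2] at h
      ext a
      have := congrArg (Multiset.count a) h
      simp [Multiset.count_add] at this ⊢
      omega
    have hR' : R = R1 + G2r := by
      have h := hReq
      rw [hR1] at h
      ext a
      have := congrArg (Multiset.count a) h
      simp [Multiset.count_add] at this ⊢
      omega
    have key : binom K V E B R =
        mono K E B2 * binom K V E G1b G1r + mono K E R1 * binom K V E G2b G2r := by
      rw [binom_eq, binom_eq, binom_eq, hB', hR', hB2, hR1,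
        mono_add, mono_add, mono_add, mono_add]
      ring
    rw [key]
    exact Ideal.add_mem _ (Ideal.mul_mem_left _ _ (binom_mem_span hbal1 h1b h1r))
      (Ideal.mul_mem_left _ _ (binom_mem_span hbal2 h2b h2r))
  · -- Case (ii): blue and red splitting sets
    obtain ⟨S, T, G1b, G1r, G2b, G2r, U1b, U1r, U2b, U2r, hsp1, hG1r, hScard, hsp2, hU2b,
      hTcard, hG1bcard, hU2rcard, hG2bcard, hU1rcard, hST⟩ := hcase
    obtain ⟨-, -, -, hbal1, hbal2, -, -, hSeq, hBeq, hReq⟩ := hsp1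
    obtain ⟨-, -, -, ubal1, ubal2, -, -, hTeq, uBeq, uReq⟩ := hsp2
    obtain ⟨c, hc⟩ := Multiset.exists_mem_of_ne_zero hST
    have hcS : c ∈ S := (Multiset.mem_inter.mp hc).1
    have hcT : c ∈ T := (Multiset.mem_inter.mp hc).2
    have hS2b : S ≤ G2b := hSeq ▸ Multiset.inter_le_right
    have hT1r : T ≤ U1r := by
      have := hTeq ▸ (Multiset.inter_le_left : U1r ∩ U2b ≤ U1r)
      exact hU2b ▸ this
    obtain ⟨B2, hB2⟩ : ∃ x, G2b = S + x := ⟨G2b - S, (add_tsub_cancel_of_le hS2b).symm⟩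
    obtain ⟨R1, hR1v⟩ : ∃ x, U1r = T + x := ⟨U1r - T, (add_tsub_cancel_of_le hT1r).symm⟩
    have hRg2r : R = G2r := by
      have h := hReq
      rw [hG1r] at h
      ext a
      have := congrArg (Multiset.count a) h
      simp [Multiset.count_add] at this ⊢
      omega
    have hBu1b : B = U1b := by
      have h := uBeq
      rw [hU2b] at h
      ext a
      have := congrArg (Multiset.count a) h
      simp [Multiset.count_add] at this ⊢
      omega
    have hB' : B = G1b + B2 := by
      have h := hBeq
      rw [hB2] at h
      ext a
      have := congrArg (Multiset.count a) h
      simp [Multiset.count_add] at this ⊢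
      omega
    have hR' : R = R1 + U2r := by
      have h := uReq
      rw [hR1v] at h
      ext a
      have := congrArg (Multiset.count a) h
      simp [Multiset.count_add] at this ⊢
      omega
    have hcG2b : c ∈ G2b := Multiset.mem_of_le hS2b hcS
    have hcU1r : c ∈ U1r := Multiset.mem_of_le hT1r hcT
    have hbalG2bU1r : Balanced V E G2b U1r := fun v =>
      calc degIn V E v G2b = degIn V E v G2r := hbal2 v
        _ = degIn V E v R := by rw [hRg2r]
        _ = degIn V E v B := (hbal v).symm
        _ = degIn V E v U1b := by rw [hBu1b]
        _ = degIn V E v U1r := ubal1 v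
    have hbalE : Balanced V E (G2b.erase c) (U1r.erase c) :=
      balanced_erase hbalG2bU1r hcG2b hcU1r
    have e1 : X c * mono K E (G2b.erase c) = mono K E S * mono K E B2 := by
      rw [← mono_cons, Multiset.cons_erase hcG2b, hB2, mono_add]
    have e2 : X c * mono K E (U1r.erase c) = mono K E T * mono K E R1 := by
      rw [← mono_cons, Multiset.cons_erase hcU1r, hR1v, mono_add]
    have key : binom K V E B R =
        mono K E B2 * binom K V E G1b S + mono K E R1 * binom K V E T U2r
          + X c * binom K V E (G2b.erase c) (U1r.erase c) := by
      rw [binom_eq, binom_eq, binom_eq, binom_eq, hB', hR', mono_add, mono_add,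
        mul_sub (X c : MvPolynomial (Edge V E) K), e1, e2]
      ring
    rw [key]
    have hbal1' : Balanced V E G1b S := hG1r ▸ hbal1
    have hbal2' : Balanced V E T U2r := hU2b ▸ ubal2
    have hcard1 : Multiset.card (G2b.erase c) < n := by
      have h1 := Multiset.card_erase_of_mem hcG2b
      rw [Nat.pred_eq_sub_one] at h1
      have h2 : 0 < Multiset.card G2b := Multiset.card_pos_iff_exists_mem.mpr ⟨c, hcG2b⟩
      omega
    have hcard2 : Multiset.card (U1r.erase c) < n := by
      have h1 := Multiset.card_erase_of_mem hcU1r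
      rw [Nat.pred_eq_sub_one] at h1
      have h2 : 0 < Multiset.card U1r := Multiset.card_pos_iff_exists_mem.mpr ⟨c, hcU1r⟩
      omega
    exact Ideal.add_mem _
      (Ideal.add_mem _ (Ideal.mul_mem_left _ _ (binom_mem_span hbal1' hG1bcard hScard))
        (Ideal.mul_mem_left _ _ (binom_mem_span hbal2' hTcard hU2rcard)))
      (Ideal.mul_mem_left _ _ (binom_mem_span hbalE hcard1 hcard2))


end ToricHG
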